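/- Let f : ℂ³ → ℂ³ be the monomial map f(x,y,z) = (x³y²z³, x²yz², x²y²z). Then the topological degree of the germ of f at 0 equals 1, yet f is not injective on any neighborhood of 0 (it contracts the coordinate hyperplanes to the origin); i.e. f is a strict germ. -/

import Mathlib

open scoped ENat

/-- The topological degree of the germ at `0` of a map `f` whose representative is defined
on the domain `Ω ⊆ ℂ³`: the infimum over open neighborhoods `U ⊆ Ω` of `0` of the supremum,
over points `y` with finite fiber under `f|_U`, of the cardinality of that fiber. -/
noncomputable def topdeg3 (Ω : Set (ℂ × ℂ × ℂ)) (f : ℂ × ℂ × ℂ → ℂ × ℂ × ℂ) : ℕ∞ :=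
  ⨅ (U : Set (ℂ × ℂ × ℂ)) (_ : IsOpen U ∧ (0 : ℂ × ℂ × ℂ) ∈ U ∧ U ⊆ Ω),
    ⨆ (y : ℂ × ℂ × ℂ) (_ : (U ∩ f ⁻¹' {y}).Finite), ((U ∩ f ⁻¹' {y}).ncard : ℕ∞)

/-- The monomial map `f(x,y,z) = (x³y²z³, x²yz², x²y²z)` has topological
degree `1` at the origin, yet it is not injective on any neighborhood of `0`: it is a strict
germ. -/
theorem monomial_threefold_is_strict
    (f : ℂ × ℂ × ℂ → ℂ × ℂ × ℂ)
    (hf : ∀ p : ℂ × ℂ × ℂ,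
      f p = (p.1 ^ 3 * p.2.1 ^ 2 * p.2.2 ^ 3,
             p.1 ^ 2 * p.2.1 * p.2.2 ^ 2,
             p.1 ^ 2 * p.2.1 ^ 2 * p.2.2)) :
    topdeg3 Set.univ f = 1 ∧
    ∀ V : Set (ℂ × ℂ × ℂ), IsOpen V → (0 : ℂ × ℂ × ℂ) ∈ V → ¬ Set.InjOn f V := by
  -- any point with a zero coordinate maps to 0
  have fzero : ∀ p : ℂ × ℂ × ℂ, p.1 = 0 ∨ p.2.1 = 0 ∨ p.2.2 = 0 → f p = 0 := by
    rintro ⟨x, y, z⟩ (h | h | h) <;> simp only at h <;>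
      simp [hf, h, Prod.ext_iff]
  -- injectivity on points with nonzero image first coordinate
  have key : ∀ p q : ℂ × ℂ × ℂ, f p = f q → (f p).1 ≠ 0 → p = q := by
    rintro ⟨x, y, z⟩ ⟨a, b, c⟩ heq hne
    rw [hf, hf] at heq
    rw [hf] at hne
    simp only [Prod.mk.injEq] at heq
    obtain ⟨h1, h2, h3⟩ := heq
    have hx : x ≠ 0 := fun h => hne (by simp [h])
    have hy : y ≠ 0 := fun h => hne (by simp [h])
    have hz : z ≠ 0 := fun h => hne (by simp [h])
    have hA : x ^ 3 * y ^ 2 * z ^ 3 ≠ 0 :=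
      mul_ne_zero (mul_ne_zero (pow_ne_zero _ hx) (pow_ne_zero _ hy)) (pow_ne_zero _ hz)
    have hB : x ^ 2 * y * z ^ 2 ≠ 0 :=
      mul_ne_zero (mul_ne_zero (pow_ne_zero _ hx) hy) (pow_ne_zero _ hz)
    have hC : x ^ 2 * y ^ 2 * z ≠ 0 :=
      mul_ne_zero (mul_ne_zero (pow_ne_zero _ hx) (pow_ne_zero _ hy)) hz
    have hBC : (x ^ 2 * y * z ^ 2) ^ 2 * (x ^ 2 * y ^ 2 * z) ≠ 0 :=
      mul_ne_zero (pow_ne_zero _ hB) hC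
    have e1 : x * (x ^ 3 * y ^ 2 * z ^ 3) ^ 3 = a * (x ^ 3 * y ^ 2 * z ^ 3) ^ 3 := by
      calc x * (x ^ 3 * y ^ 2 * z ^ 3) ^ 3
          = (x ^ 2 * y * z ^ 2) ^ 4 * (x ^ 2 * y ^ 2 * z) := by ring
        _ = (a ^ 2 * b * c ^ 2) ^ 4 * (a ^ 2 * b ^ 2 * c) := by rw [h2, h3]
        _ = a * (a ^ 3 * b ^ 2 * c ^ 3) ^ 3 := by ring
        _ = a * (x ^ 3 * y ^ 2 * z ^ 3) ^ 3 := by rw [h1]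
    have e2 : y * (x ^ 2 * y * z ^ 2) ^ 3 = b * (x ^ 2 * y * z ^ 2) ^ 3 := by
      calc y * (x ^ 2 * y * z ^ 2) ^ 3
          = (x ^ 3 * y ^ 2 * z ^ 3) ^ 2 := by ring
        _ = (a ^ 3 * b ^ 2 * c ^ 3) ^ 2 := by rw [h1]
        _ = b * (a ^ 2 * b * c ^ 2) ^ 3 := by ring
        _ = b * (x ^ 2 * y * z ^ 2) ^ 3 := by rw [h2]
    have e3 : z * ((x ^ 2 * y * z ^ 2) ^ 2 * (x ^ 2 * y ^ 2 * z))
        = c * ((x ^ 2 * y * z ^ 2) ^ 2 * (x ^ 2 * y ^ 2 * z)) := by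
      calc z * ((x ^ 2 * y * z ^ 2) ^ 2 * (x ^ 2 * y ^ 2 * z))
          = (x ^ 3 * y ^ 2 * z ^ 3) ^ 2 := by ring
        _ = (a ^ 3 * b ^ 2 * c ^ 3) ^ 2 := by rw [h1]
        _ = c * ((a ^ 2 * b * c ^ 2) ^ 2 * (a ^ 2 * b ^ 2 * c)) := by ring
        _ = c * ((x ^ 2 * y * z ^ 2) ^ 2 * (x ^ 2 * y ^ 2 * z)) := by rw [h2, h3]
    have hxa : x = a := mul_right_cancel₀ (pow_ne_zero 3 hA) e1
    have hyb : y = b := mul_right_cancel₀ (pow_ne_zero 3 hB) e2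
    have hzc : z = c := mul_right_cancel₀ hBC e3
    simp [hxa, hyb, hzc]
  -- image first coordinate zero forces image zero
  have comp1 : ∀ p : ℂ × ℂ × ℂ, (f p).1 = 0 → f p = 0 := by
    intro p h
    rw [hf] at h
    apply fzero
    have h' : p.1 ^ 3 * p.2.1 ^ 2 * p.2.2 ^ 3 = 0 := h
    rcases mul_eq_zero.mp h' with h'' | h''
    · rcases mul_eq_zero.mp h'' with h3 | h3
      · exact Or.inl ((pow_eq_zero_iff three_ne_zero).mp h3)
      · exact Or.inr (Or.inl ((pow_eq_zero_iff two_ne_zero).mp h3))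
    · exact Or.inr (Or.inr ((pow_eq_zero_iff three_ne_zero).mp h''))
  constructor
  · refine le_antisymm ?_ ?_
    · -- topdeg ≤ 1 : take U = univ
      refine le_trans (iInf₂_le Set.univ ⟨isOpen_univ, Set.mem_univ _, subset_rfl⟩) ?_
      refine iSup₂_le fun y hfin => ?_
      by_cases hy : y = 0
      · -- the fiber over 0 is infinite, contradiction
        exfalso
        refine (Set.infinite_of_injective_forall_mem
          (f := fun s : ℂ => ((0 : ℂ), s, (0 : ℂ))) ?_ ?_) hfin
        · intro a b h
          simpa using congrArg (fun p : ℂ × ℂ × ℂ => p.2.1) h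
        · intro s
          refine ⟨Set.mem_univ _, ?_⟩
          simp only [Set.mem_preimage, Set.mem_singleton_iff, hy]
          exact fzero _ (by simp)
      · -- subsingleton fiber
        have : (Set.univ ∩ f ⁻¹' {y}).ncard ≤ 1 := by
          rw [Set.ncard_le_one hfin]
          rintro p ⟨-, hp⟩ q ⟨-, hq⟩
          simp only [Set.mem_preimage, Set.mem_singleton_iff] at hp hq
          have hne : (f p).1 ≠ 0 := fun h0 => hy (by rw [← hp]; exact comp1 p h0)
          exact key p q (hp.trans hq.symm) hne
        exact_mod_cast this
    · -- topdeg ≥ 1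
      refine le_iInf₂ fun U hU => ?_
      obtain ⟨hUopen, hU0, -⟩ := hU
      obtain ⟨ε, hε, hball⟩ := Metric.isOpen_iff.mp hUopen 0 hU0
      set t : ℂ := ((ε / 2 : ℝ) : ℂ) with ht
      have htne : t ≠ 0 := by
        simp only [ht, ne_eq, Complex.ofReal_eq_zero]
        positivity
      have hd : dist ((t, t, t) : ℂ × ℂ × ℂ) 0 < ε := by
        rw [Prod.dist_eq, Prod.dist_eq]
        simp only [Prod.fst_zero, Prod.snd_zero, max_self, Complex.dist_eq, sub_zero, ht,
          Complex.norm_real, Real.norm_eq_abs]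
        rw [abs_of_pos (by linarith)]
        linarith
      have hpU : ((t, t, t) : ℂ × ℂ × ℂ) ∈ U := hball (Metric.mem_ball.mpr hd)
      set p : ℂ × ℂ × ℂ := (t, t, t) with hp
      have hfne : (f p).1 ≠ 0 := by
        rw [hf]
        exact mul_ne_zero (mul_ne_zero (pow_ne_zero _ htne) (pow_ne_zero _ htne))
          (pow_ne_zero _ htne)
      have hfin : (U ∩ f ⁻¹' {f p}).Finite := by
        apply (Set.finite_singleton p).subset
        rintro q ⟨-, hq⟩
        simp only [Set.mem_preimage, Set.mem_singleton_iff] at hq ⊢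
        exact key q p hq (hq ▸ hfne)
      have hmem : p ∈ U ∩ f ⁻¹' {f p} := ⟨hpU, rfl⟩
      have hpos : 0 < (U ∩ f ⁻¹' {f p}).ncard := (Set.ncard_pos hfin).mpr ⟨p, hmem⟩
      refine le_iSup₂_of_le (f p) hfin ?_
      exact_mod_cast hpos
  · -- not injective on any neighborhood
    intro V hV hV0 hinj
    obtain ⟨ε, hε, hball⟩ := Metric.isOpen_iff.mp hV 0 hV0
    set t : ℂ := ((ε / 2 : ℝ) : ℂ) with ht
    have htne : t ≠ 0 := by
      simp only [ht, ne_eq, Complex.ofReal_eq_zero]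
      positivity
    have hd : dist ((t, 0, 0) : ℂ × ℂ × ℂ) 0 < ε := by
      rw [Prod.dist_eq, Prod.dist_eq]
      simp only [Prod.fst_zero, Prod.snd_zero, Complex.dist_eq, sub_zero, ht,
        Complex.norm_real, Real.norm_eq_abs, dist_self, map_zero]
      rw [abs_of_pos (by linarith)]
      rw [max_self, max_eq_left (by linarith)]
      linarith
    have hpV : ((t, 0, 0) : ℂ × ℂ × ℂ) ∈ V := hball (Metric.mem_ball.mpr hd)
    have h1 : f ((t, 0, 0) : ℂ × ℂ × ℂ) = 0 := fzero _ (by simp)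
    have h2 : f (0 : ℂ × ℂ × ℂ) = 0 := fzero _ (by simp [Prod.ext_iff])
    have := hinj hpV hV0 (h1.trans h2.symm)
    rw [Prod.ext_iff] at this
    exact htne this.1
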